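/- Fix j ∈ K̄ with j² = ℏ, E = K(j) ⊆ K̄, and σ₂ ∈ Gal(K̄/K) with σ₂(j) = −j. Then: (a) there exists X ∈ GL(n, K̄) with all entries in E such that σ₂(X) = X·S; and (b) every such X is a twisted cocycle associated to r_DJ, i.e. (Ad_{X⁻¹σ(X)} ⊗ Ad_{X⁻¹σ(X)})(r_DJ) = r_DJ for all σ ∈ Gal(K̄/E) and (Ad_{X⁻¹σ₂(X)} ⊗ Ad_{X⁻¹σ₂(X)})(r_DJ) = r_DJ^{21}. In particular the set of twisted cocycles associated to r_DJ is non-empty. -/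

import Mathlib

open Matrix
open scoped TensorProduct

noncomputable section

/-- `K = ℂ((ℏ))`, the field of formal Laurent series over `ℂ`. -/
abbrev K : Type := LaurentSeries ℂ

/-- The series variable `ℏ` of `K = ℂ((ℏ))`. -/
def hbar : K := HahnSeries.single (1 : ℤ) (1 : ℂ)

/-- A fixed algebraic closure of `K`. -/
abbrev Kbar : Type := AlgebraicClosure K

/-- `E = K(j)`, the subfield of `K̄` generated over `K` by `j`. -/
abbrev Efield (j : Kbar) : IntermediateField K Kbar :=
  IntermediateField.adjoin K {j}

/-- Conjugation `a ↦ X a X⁻¹` as a linear endomorphism of `Mₙ(F)`. -/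
def conjLin (F : Type*) [Field F] {n : ℕ} (X : Matrix (Fin n) (Fin n) F) :
    Matrix (Fin n) (Fin n) F →ₗ[F] Matrix (Fin n) (Fin n) F :=
  (LinearMap.mulLeft F X).comp (LinearMap.mulRight F X⁻¹)

/-- The operator `Ad_X ⊗ Ad_X : a ⊗ b ↦ (X a X⁻¹) ⊗ (X b X⁻¹)` on
`Mₙ(F) ⊗_F Mₙ(F)`. -/
def AdT (F : Type*) [Field F] {n : ℕ} (X : Matrix (Fin n) (Fin n) F) :
    (Matrix (Fin n) (Fin n) F ⊗[F] Matrix (Fin n) (Fin n) F) →ₗ[F]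
      (Matrix (Fin n) (Fin n) F ⊗[F] Matrix (Fin n) (Fin n) F) :=
  TensorProduct.map (conjLin F X) (conjLin F X)

/-- `Ω₀ = Σᵢ Eᵢᵢ ⊗ Eᵢᵢ − (1/n)·(I ⊗ I)`. -/
def Omega0 (F : Type*) [Field F] (n : ℕ) :
    Matrix (Fin n) (Fin n) F ⊗[F] Matrix (Fin n) (Fin n) F :=
  (∑ i : Fin n, Matrix.single i i (1 : F) ⊗ₜ[F] Matrix.single i i (1 : F))
    - (n : F)⁻¹ • ((1 : Matrix (Fin n) (Fin n) F) ⊗ₜ[F] (1 : Matrix (Fin n) (Fin n) F))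

/-- The Drinfeld–Jimbo `r`-matrix `r_DJ = Σ_{i<j} E_ij ⊗ E_ji + (1/2)·Ω₀`. -/
def rDJ (F : Type*) [Field F] (n : ℕ) :
    Matrix (Fin n) (Fin n) F ⊗[F] Matrix (Fin n) (Fin n) F :=
  (∑ i : Fin n, ∑ j : Fin n,
      if (i : ℕ) < (j : ℕ) then
        Matrix.single i j (1 : F) ⊗ₜ[F] Matrix.single j i (1 : F)
      else 0)
    + (2⁻¹ : F) • Omega0 F n

/-- The matrix `S` with 1's on the antidiagonal and 0 elsewhere. -/
def Smat (F : Type*) [Field F] (n : ℕ) : Matrix (Fin n) (Fin n) F :=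
  Matrix.of fun i k => if (i : ℕ) + (k : ℕ) + 1 = n then 1 else 0

set_option maxHeartbeats 1000000
set_option synthInstance.maxHeartbeats 1000000

lemma eq_rev_comm {n : ℕ} {a b : Fin n} : a = b.rev ↔ b = a.rev := by
  constructor <;> rintro rfl <;> simp

lemma smat_apply {F : Type*} [Field F] {n : ℕ} (i k : Fin n) :
    Smat F n i k = if k = i.rev then 1 else 0 := by
  have hi := i.isLt; have hk := k.isLt
  simp only [Smat, Matrix.of_apply]
  congr 1
  simp only [eq_iff_iff, Fin.ext_iff, Fin.val_rev]
  omega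

lemma smat_mul_smat (F : Type*) [Field F] (n : ℕ) : Smat F n * Smat F n = 1 := by
  ext i k
  simp only [Matrix.mul_apply, smat_apply, Matrix.one_apply, eq_rev_comm (a := k)]
  simp [Finset.sum_ite_eq', eq_comm, Fin.rev_inj]

lemma smat_inv (F : Type*) [Field F] (n : ℕ) : (Smat F n)⁻¹ = Smat F n :=
  Matrix.inv_eq_right_inv (smat_mul_smat F n)

lemma smat_conj_std {F : Type*} [Field F] {n : ℕ} (i j : Fin n) (c : F) :
    Smat F n * (Matrix.single i j c * Smat F n) = Matrix.single i.rev j.rev c := by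
  ext a b
  simp only [Matrix.mul_apply, smat_apply, Matrix.single, Matrix.of_apply,
    eq_rev_comm (a := b)]
  simp [Finset.sum_ite_eq', eq_rev_comm, Finset.sum_ite_eq, ite_and, eq_comm]
  split_ifs <;> rfl

lemma conjLin_smat_std {F : Type*} [Field F] {n : ℕ} (i j : Fin n) (c : F) :
    conjLin F (Smat F n) (Matrix.single i j c) = Matrix.single i.rev j.rev c := by
  simp only [conjLin, LinearMap.comp_apply, LinearMap.mulLeft_apply, LinearMap.mulRight_apply,
    smat_inv]
  exact smat_conj_std i j c

lemma conjLin_smat_one {F : Type*} [Field F] {n : ℕ} :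
    conjLin F (Smat F n) (1 : Matrix (Fin n) (Fin n) F) = 1 := by
  simp [conjLin, smat_inv, smat_mul_smat]

lemma conjLin_one {F : Type*} [Field F] {n : ℕ} (A : Matrix (Fin n) (Fin n) F) :
    conjLin F (1 : Matrix (Fin n) (Fin n) F) A = A := by
  simp [conjLin, inv_one]

lemma AdT_one (F : Type*) [Field F] (n : ℕ)
    (x : Matrix (Fin n) (Fin n) F ⊗[F] Matrix (Fin n) (Fin n) F) :
    AdT F (1 : Matrix (Fin n) (Fin n) F) x = x := by
  induction x using TensorProduct.induction_on with
  | zero => simp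
  | tmul a b => simp [AdT, conjLin_one]
  | add a b ha hb => simp [map_add, ha, hb]

lemma comm_omega (F : Type*) [Field F] (n : ℕ) :
    TensorProduct.comm F _ _ (Omega0 F n) = Omega0 F n := by
  simp [Omega0, map_sub, map_sum, _root_.map_smul]

lemma AdT_smat_omega (F : Type*) [Field F] (n : ℕ) :
    AdT F (Smat F n) (Omega0 F n) = Omega0 F n := by
  simp only [Omega0, map_sub, map_sum, _root_.map_smul, AdT, TensorProduct.map_tmul,
    conjLin_smat_std, conjLin_smat_one]
  congr 1
  exact Fintype.sum_equiv Fin.revPerm _ _ (fun i => by simp [Fin.revPerm])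

lemma AdT_smat_rDJ (F : Type*) [Field F] (n : ℕ) :
    AdT F (Smat F n) (rDJ F n) = TensorProduct.comm F _ _ (rDJ F n) := by
  have hO : AdT F (Smat F n) ((2⁻¹ : F) • Omega0 F n)
      = TensorProduct.comm F _ _ ((2⁻¹ : F) • Omega0 F n) := by
    rw [_root_.map_smul, _root_.map_smul, AdT_smat_omega, comm_omega]
  rw [rDJ, map_add, map_add, hO]
  congr 1
  rw [map_sum, map_sum]
  simp only [map_sum, apply_ite (AdT F (Smat F n)),
    apply_ite (TensorProduct.comm F (Matrix (Fin n) (Fin n) F) (Matrix (Fin n) (Fin n) F)),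
    map_zero, AdT, TensorProduct.map_tmul, conjLin_smat_std, TensorProduct.comm_tmul]
  rw [Finset.sum_comm (γ := Fin n)]
  refine Fintype.sum_equiv Fin.revPerm _ _ (fun i => ?_)
  refine Fintype.sum_equiv Fin.revPerm _ _ (fun k => ?_)
  simp only [Fin.revPerm_apply]
  have hc : ((i.rev : ℕ) < (k.rev : ℕ)) ↔ ((k : ℕ) < (i : ℕ)) :=
    ⟨fun h => Fin.rev_lt_rev.mp h, fun h => Fin.rev_lt_rev.mpr h⟩
  rw [if_congr hc rfl rfl]
  split_ifs with h
  · simp [TensorProduct.map_tmul, conjLin_smat_std]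
  · simp

/-- (a) There exists `X ∈ GL(n, K̄)` with all entries in `E = K(j)` such that
`σ₂(X) = X·S`; and (b) every such `X` is a twisted cocycle associated to
`r_DJ`.  In particular the set of twisted cocycles for `r_DJ` is non-empty. -/
theorem statement12 (n : ℕ) (hn : 2 ≤ n) (j : Kbar)
    (hj : j ^ 2 = algebraMap K Kbar hbar)
    (σ₂ : Kbar ≃ₐ[K] Kbar) (hσ : σ₂ j = -j) :
    (∃ X : Matrix (Fin n) (Fin n) Kbar,
        IsUnit X ∧ (∀ a b, X a b ∈ Efield j) ∧ X.map σ₂ = X * Smat Kbar n) ∧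
    ∀ X : Matrix (Fin n) (Fin n) Kbar,
      IsUnit X → (∀ a b, X a b ∈ Efield j) → X.map σ₂ = X * Smat Kbar n →
      (∀ σ : Kbar ≃ₐ[K] Kbar, (∀ x ∈ Efield j, σ x = x) →
          AdT Kbar (X⁻¹ * X.map σ) (rDJ Kbar n) = rDJ Kbar n) ∧
        AdT Kbar (X⁻¹ * X.map σ₂) (rDJ Kbar n)
          = (TensorProduct.comm Kbar _ _) (rDJ Kbar n) := by
  classical
  have hjE : j ∈ Efield j := IntermediateField.mem_adjoin_simple_self K j
  have hj0 : j ≠ 0 := by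
    intro h
    have h0 : algebraMap K Kbar hbar = 0 := by rw [← hj, h]; ring
    have h1 : (hbar : K) = 0 := by
      have := (algebraMap K Kbar).injective
      exact this (by simpa using h0)
    have hne : hbar ≠ 0 := by
      unfold hbar
      exact HahnSeries.single_ne_zero one_ne_zero
    exact hne h1
  have h4j : (4 : Kbar) * j ≠ 0 := by
    have h4 : (4 : Kbar) ≠ 0 := by
      have h : (4 : Kbar) = algebraMap K Kbar (algebraMap ℂ K 4) := by rw [map_ofNat, map_ofNat]
      rw [h, ne_eq, map_eq_zero, map_eq_zero]
      norm_num
    exact mul_ne_zero h4 hj0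
  set S : Matrix (Fin n) (Fin n) Kbar := Smat Kbar n with hS
  set a : Kbar := 1 + j with ha
  set b : Kbar := 1 - j with hb
  set X : Matrix (Fin n) (Fin n) Kbar := a • (1 : Matrix (Fin n) (Fin n) Kbar) + b • S
    with hXdef
  have hXY : X * (a • (1 : Matrix (Fin n) (Fin n) Kbar) - b • S)
      = ((4 : Kbar) * j) • (1 : Matrix (Fin n) (Fin n) Kbar) := by
    have h4 : a * a - b * b = 4 * j := by rw [ha, hb]; ring
    simp only [hXdef, hS, add_mul, mul_sub, smul_mul_assoc, mul_smul_comm, smul_smul,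
      one_mul, mul_one, smat_mul_smat]
    rw [smul_add, smul_add, smul_smul, smul_smul, smul_smul, smul_smul, ← h4, sub_smul,
      mul_comm b a]
    abel
  have hXunit : IsUnit X := by
    have h : X * (((4 : Kbar) * j)⁻¹ • (a • (1 : Matrix (Fin n) (Fin n) Kbar) - b • S))
        = 1 := by
      rw [Matrix.mul_smul, hXY, smul_smul, inv_mul_cancel₀ h4j, one_smul]
    exact ⟨⟨X, _, h, mul_eq_one_comm.mp h⟩, rfl⟩
  have haE : a ∈ Efield j := add_mem (one_mem _) hjE
  have hbE : b ∈ Efield j := sub_mem (one_mem _) hjE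
  have hXmem : ∀ p q, X p q ∈ Efield j := by
    intro p q
    have h1 : (1 : Matrix (Fin n) (Fin n) Kbar) p q ∈ Efield j := by
      rw [Matrix.one_apply]; split_ifs; exacts [one_mem _, zero_mem _]
    have h2 : S p q ∈ Efield j := by
      rw [hS, smat_apply]; split_ifs; exacts [one_mem _, zero_mem _]
    simp only [hXdef, Matrix.add_apply, Matrix.smul_apply, smul_eq_mul]
    exact add_mem (mul_mem haE h1) (mul_mem hbE h2)
  have hXmap : X.map σ₂ = X * S := by
    have hXS : X * S = b • (1 : Matrix (Fin n) (Fin n) Kbar) + a • S := by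
      simp only [hXdef, hS, add_mul, smul_mul_assoc, one_mul, smat_mul_smat]
      abel
    rw [hXS]
    ext p q
    have h1 : σ₂ ((1 : Matrix (Fin n) (Fin n) Kbar) p q)
        = (1 : Matrix (Fin n) (Fin n) Kbar) p q := by
      rw [Matrix.one_apply]; split_ifs <;> simp
    have h2 : σ₂ (S p q) = S p q := by
      rw [hS, smat_apply]; split_ifs <;> simp
    have hsa : σ₂ a = b := by rw [ha, hb, map_add, _root_.map_one, hσ]; ring
    have hsb : σ₂ b = a := by rw [ha, hb, map_sub, _root_.map_one, hσ]; ring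
    simp only [hXdef, Matrix.map_apply, Matrix.add_apply, Matrix.smul_apply, smul_eq_mul,
      _root_.map_add, _root_.map_mul, h1, h2, hsa, hsb]
  refine ⟨⟨X, hXunit, hXmem, hXmap⟩, ?_⟩
  intro Y hY hYmem hYmap
  have hinv : Y⁻¹ * Y = 1 := Matrix.nonsing_inv_mul Y ((Matrix.isUnit_iff_isUnit_det Y).mp hY)
  constructor
  · intro σ hσfix
    have hfix : Y.map σ = Y := by
      ext p q; exact hσfix _ (hYmem p q)
    rw [hfix, hinv]
    exact AdT_one Kbar n _
  · rw [hYmap, ← mul_assoc, hinv, one_mul]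
    exact AdT_smat_rDJ Kbar n
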